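/- Let G = (U_G ∪ V, E_G) be a bipartite graph with a maximum matching of size OPT, and let H = (U_H ∪ V, E_H) be a left k-copy of G (each keyword of G is duplicated k times with identical neighborhoods). Then for any arrival order on U_H, the expected size of the matching produced by the Ranking algorithm on H, over a uniformly random ranking σ of V, is at least k·OPT·(1 − e^{−1/k} + o(1)) as OPT → ∞. -/

import Mathlib

noncomputable def greedyMatchedUpTo (m : ℕ) {R : Type*} [Fintype R] [DecidableEq R]
    (A : Fin m → R → Prop) [∀ t v, Decidable (A t v)] (rk : R → ℕ) : ℕ → Finset R
  | 0 => ∅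
  | t + 1 =>
    let M := greedyMatchedUpTo m A rk t
    if h : t < m then
      let avail := Finset.univ.filter fun v => A ⟨t, h⟩ v ∧ v ∉ M
      if hne : avail.Nonempty then
        insert (Function.argminOn rk ↑avail (Finset.coe_nonempty.mpr hne)) M
      else M
    else M

/-- Size of the matching produced by Ranking with ranking `rk`. -/
noncomputable def greedySize (m : ℕ) {R : Type*} [Fintype R] [DecidableEq R]
    (A : Fin m → R → Prop) [∀ t v, Decidable (A t v)] (rk : R → ℕ) : ℕ :=
  (greedyMatchedUpTo m A rk m).card

namespace Stmt9

open Finset Function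

variable {m : ℕ} {R : Type*} [Fintype R] [DecidableEq R]

noncomputable def matchAt (m : ℕ) {R : Type*} [Fintype R] [DecidableEq R]
    (A : Fin m → R → Prop) [∀ t v, Decidable (A t v)] (rk : R → ℕ) (t : ℕ) : Option R :=
  if h : t < m then
    let M := greedyMatchedUpTo m A rk t
    let avail := Finset.univ.filter fun v => A ⟨t, h⟩ v ∧ v ∉ M
    if hne : avail.Nonempty then
      some (Function.argminOn rk ↑avail (Finset.coe_nonempty.mpr hne))
    else none
  else none

theorem greedy_succ (A : Fin m → R → Prop) [∀ t v, Decidable (A t v)] (rk : R → ℕ) (t : ℕ) :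
    greedyMatchedUpTo m A rk (t+1) =
      (matchAt m A rk t).elim (greedyMatchedUpTo m A rk t)
        (fun z => insert z (greedyMatchedUpTo m A rk t)) := by
  rw [greedyMatchedUpTo, matchAt]
  split_ifs with h
  · by_cases hne : (Finset.univ.filter fun v => A ⟨t, h⟩ v ∧ v ∉ greedyMatchedUpTo m A rk t).Nonempty
    · simp [hne]
    · simp [hne]
  · simp

theorem greedy_mono (A : Fin m → R → Prop) [∀ t v, Decidable (A t v)] (rk : R → ℕ)
    {s t : ℕ} (h : s ≤ t) : greedyMatchedUpTo m A rk s ⊆ greedyMatchedUpTo m A rk t := by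
  induction t with
  | zero => simpa [Nat.le_zero.mp h] using Finset.Subset.refl _
  | succ t ih =>
    rcases Nat.le_succ_iff.mp h with h' | h'
    · refine (ih h').trans ?_
      rw [greedy_succ]
      cases matchAt m A rk t with
      | none => simp
      | some z => simp [Finset.subset_insert]
    · simp [h']

theorem matchAt_some {A : Fin m → R → Prop} [∀ t v, Decidable (A t v)] {rk : R → ℕ} {t : ℕ}
    {z : R} (hz : matchAt m A rk t = some z) :
    ∃ h : t < m, z ∉ greedyMatchedUpTo m A rk t ∧
      greedyMatchedUpTo m A rk (t+1) = insert z (greedyMatchedUpTo m A rk t) ∧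
      A ⟨t, h⟩ z ∧
      ∀ w, A ⟨t, h⟩ w → w ∉ greedyMatchedUpTo m A rk t → rk z ≤ rk w := by
  have hsucc := greedy_succ A rk t
  rw [matchAt] at hz hsucc
  dsimp only at hz hsucc
  split_ifs at hz hsucc with h hne
  · rw [Option.some_inj] at hz
    subst hz
    have hm := Function.argminOn_mem rk
      (↑(Finset.univ.filter fun v => A ⟨t, h⟩ v ∧ v ∉ greedyMatchedUpTo m A rk t))
      (Finset.coe_nonempty.mpr hne)
    rw [Finset.mem_coe, Finset.mem_filter] at hm
    refine ⟨h, hm.2.2, by simpa using hsucc, hm.2.1, ?_⟩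
    intro w hw hwM
    exact Function.argminOn_le rk _
      (by rw [Finset.mem_coe, Finset.mem_filter]; exact ⟨Finset.mem_univ _, hw, hwM⟩)
  all_goals exact absurd hz (by simp)

/-- if some available vertex exists, matchAt is some and picks a min. -/
theorem matchAt_isSome {A : Fin m → R → Prop} [∀ t v, Decidable (A t v)] {rk : R → ℕ} {t : ℕ}
    (h : t < m) {w : R} (hw : A ⟨t, h⟩ w) (hwM : w ∉ greedyMatchedUpTo m A rk t) :
    ∃ z, matchAt m A rk t = some z := by
  rw [matchAt]
  have hne : (Finset.univ.filter fun v => A ⟨t, h⟩ v ∧ v ∉ greedyMatchedUpTo m A rk t).Nonempty :=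
    ⟨w, by simp [hw, hwM]⟩
  simp only [dif_pos h]
  rw [dif_pos hne]
  exact ⟨_, rfl⟩

theorem matchAt_inj {A : Fin m → R → Prop} [∀ t v, Decidable (A t v)] {rk : R → ℕ}
    {s t : ℕ} {z : R} (hs : matchAt m A rk s = some z) (ht : matchAt m A rk t = some z) :
    s = t := by
  rcases lt_trichotomy s t with hlt | heq | hlt
  · obtain ⟨_, _, hins, _, _⟩ := matchAt_some hs
    obtain ⟨_, hzt, _, _, _⟩ := matchAt_some ht
    exact (hzt (greedy_mono A rk hlt (by rw [hins]; exact Finset.mem_insert_self _ _))).elim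
  · exact heq
  · obtain ⟨_, hzs, _, _, _⟩ := matchAt_some hs
    obtain ⟨_, _, hint, _, _⟩ := matchAt_some ht
    exact (hzs (greedy_mono A rk hlt (by rw [hint]; exact Finset.mem_insert_self _ _))).elim

theorem matchAt_mem_final {A : Fin m → R → Prop} [∀ t v, Decidable (A t v)] {rk : R → ℕ}
    {t : ℕ} {z : R} (hz : matchAt m A rk t = some z) :
    z ∈ greedyMatchedUpTo m A rk m := by
  obtain ⟨h, _, hins, _, _⟩ := matchAt_some hz
  have hzm : z ∈ greedyMatchedUpTo m A rk (t+1) := by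
    rw [hins]; exact Finset.mem_insert_self _ _
  exact greedy_mono A rk (Nat.succ_le_of_lt h) hzm

theorem argminOn_eq {rk : R → ℕ} (hrk : Function.Injective rk) {s : Set R} (hs : s.Nonempty)
    {z : R} (hz : z ∈ s) (hmin : ∀ w ∈ s, rk z ≤ rk w) :
    Function.argminOn rk s hs = z := by
  have h1 := Function.argminOn_mem rk s hs
  exact hrk (le_antisymm (Function.argminOn_le rk s hz) (hmin _ h1))

theorem matchAt_eq_none {A : Fin m → R → Prop} [∀ t v, Decidable (A t v)] {rk : R → ℕ} {t : ℕ}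
    (h : ∀ (h : t < m) w, A ⟨t, h⟩ w → w ∈ greedyMatchedUpTo m A rk t) :
    matchAt m A rk t = none := by
  rw [matchAt]
  dsimp only
  split_ifs with ht hne
  · exfalso
    obtain ⟨w, hw⟩ := hne
    simp only [Finset.mem_filter] at hw
    exact hw.2.2 (h ht w hw.2.1)
  · rfl
  · rfl

theorem of_matchAt_none {A : Fin m → R → Prop} [∀ t v, Decidable (A t v)] {rk : R → ℕ} {t : ℕ}
    (hn : matchAt m A rk t = none) (h : t < m) {w : R} (hw : A ⟨t, h⟩ w) :
    w ∈ greedyMatchedUpTo m A rk t := by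
  by_contra hwm
  obtain ⟨z, hz⟩ := matchAt_isSome h hw hwm
  rw [hn] at hz; exact absurd hz (by simp)

theorem greedy_succ_none {A : Fin m → R → Prop} [∀ t v, Decidable (A t v)] {rk : R → ℕ} {t : ℕ}
    (hn : matchAt m A rk t = none) :
    greedyMatchedUpTo m A rk (t+1) = greedyMatchedUpTo m A rk t := by
  rw [greedy_succ, hn]; rfl

theorem greedy_succ_some {A : Fin m → R → Prop} [∀ t v, Decidable (A t v)] {rk : R → ℕ} {t : ℕ}
    {z : R} (hz : matchAt m A rk t = some z) :
    greedyMatchedUpTo m A rk (t+1) = insert z (greedyMatchedUpTo m A rk t) := by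
  rw [greedy_succ, hz]; rfl

theorem matchAt_eq_some' {A : Fin m → R → Prop} [∀ t v, Decidable (A t v)] {rk : R → ℕ}
    (hrk : Function.Injective rk) {t : ℕ} (h : t < m) {z : R}
    (hA : A ⟨t, h⟩ z) (hM : z ∉ greedyMatchedUpTo m A rk t)
    (hmin : ∀ w, A ⟨t, h⟩ w → w ∉ greedyMatchedUpTo m A rk t → rk z ≤ rk w) :
    matchAt m A rk t = some z := by
  rw [matchAt]
  dsimp only
  have hne : (Finset.univ.filter fun v => A ⟨t, h⟩ v ∧ v ∉ greedyMatchedUpTo m A rk t).Nonempty :=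
    ⟨z, by simp [hA, hM]⟩
  simp only [dif_pos h]
  rw [dif_pos hne]
  congr 1
  refine argminOn_eq hrk _ (by rw [Finset.mem_coe, Finset.mem_filter]; exact ⟨Finset.mem_univ _, hA, hM⟩) ?_
  intro w hw
  rw [Finset.mem_coe, Finset.mem_filter] at hw
  exact hmin w hw.2.1 hw.2.2
/-- Changing the rank function in a way that preserves the relative order of all
vertices other than `v`, and keeps everything below `v` below `v`, does not change the
run, provided `v` is never matched. -/
theorem run_eq_of_order (A : Fin m → R → Prop) [∀ t v, Decidable (A t v)]
    {rk rk' : R → ℕ} (hrk : Function.Injective rk) (hrk' : Function.Injective rk') (v : R)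
    (hv : v ∉ greedyMatchedUpTo m A rk m)
    (h1 : ∀ a b, a ≠ v → b ≠ v → (rk a < rk b ↔ rk' a < rk' b))
    (h2 : ∀ z, z ≠ v → rk z < rk v → rk' z < rk' v) :
    ∀ t, greedyMatchedUpTo m A rk' t = greedyMatchedUpTo m A rk t ∧
      matchAt m A rk' t = matchAt m A rk t := by
  have h1le : ∀ a b, a ≠ v → b ≠ v → rk a ≤ rk b → rk' a ≤ rk' b := by
    intro a b ha hb hab
    by_contra hc
    exact absurd ((h1 b a hb ha).mpr (not_le.mp hc)) (not_lt.mpr hab)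
  have key : ∀ t, greedyMatchedUpTo m A rk' t = greedyMatchedUpTo m A rk t →
      matchAt m A rk' t = matchAt m A rk t := by
    intro t hMt
    by_cases ht : t < m
    · rcases hmz : matchAt m A rk t with _ | z
      · refine matchAt_eq_none ?_
        intro h w hw
        rw [hMt]
        exact of_matchAt_none hmz h hw
      · obtain ⟨_, hzM, _, hAz, hmin⟩ := matchAt_some hmz
        have hzv : z ≠ v := fun h => hv (h ▸ matchAt_mem_final hmz)
        refine matchAt_eq_some' hrk' ht hAz (by rw [hMt]; exact hzM) ?_
        intro w hw hwM
        rw [hMt] at hwM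
        by_cases hwv : w = v
        · rw [hwv] at hw hwM ⊢
          exact le_of_lt (h2 z hzv (lt_of_le_of_ne (hmin v hw hwM)
            (fun hc => hzv (hrk hc))))
        · exact h1le z w hzv hwv (hmin w hw hwM)
    · rw [matchAt, matchAt]
      simp [ht]
  intro t
  induction t with
  | zero =>
    constructor
    · rfl
    · exact key 0 rfl
  | succ t ih =>
    have hm := key t ih.1
    constructor
    · rw [greedy_succ, greedy_succ, hm, ih.1]
    · refine key (t+1) ?_
      rw [greedy_succ, greedy_succ, hm, ih.1]

/-- Deleting a vertex `v` that is never matched, and re-ranking the others in an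
order-preserving way, does not change the run. -/
theorem run_eq_del (A : Fin m → R → Prop) [∀ t v, Decidable (A t v)]
    {rk rk' : R → ℕ} (hrk : Function.Injective rk) (hrk' : Function.Injective rk') (v : R)
    (hv : v ∉ greedyMatchedUpTo m A rk m)
    (h1 : ∀ a b, a ≠ v → b ≠ v → (rk a < rk b ↔ rk' a < rk' b)) :
    ∀ t, greedyMatchedUpTo m (fun s z => A s z ∧ z ≠ v) rk' t = greedyMatchedUpTo m A rk t ∧
      matchAt m (fun s z => A s z ∧ z ≠ v) rk' t = matchAt m A rk t := by
  have h1le : ∀ a b, a ≠ v → b ≠ v → rk a ≤ rk b → rk' a ≤ rk' b := by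
    intro a b ha hb hab
    by_contra hc
    exact absurd ((h1 b a hb ha).mpr (not_le.mp hc)) (not_lt.mpr hab)
  have key : ∀ t, greedyMatchedUpTo m (fun s z => A s z ∧ z ≠ v) rk' t
        = greedyMatchedUpTo m A rk t →
      matchAt m (fun s z => A s z ∧ z ≠ v) rk' t = matchAt m A rk t := by
    intro t hMt
    by_cases ht : t < m
    · rcases hmz : matchAt m A rk t with _ | z
      · refine matchAt_eq_none ?_
        intro h w hw
        rw [hMt]
        exact of_matchAt_none hmz h hw.1
      · obtain ⟨_, hzM, _, hAz, hmin⟩ := matchAt_some hmz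
        have hzv : z ≠ v := fun h => hv (h ▸ matchAt_mem_final hmz)
        refine matchAt_eq_some' hrk' ht ⟨hAz, hzv⟩ (by rw [hMt]; exact hzM) ?_
        intro w hw hwM
        rw [hMt] at hwM
        exact h1le z w hzv hw.2 (hmin w hw.1 hwM)
    · rw [matchAt, matchAt]
      simp [ht]
  intro t
  induction t with
  | zero =>
    constructor
    · rfl
    · exact key 0 rfl
  | succ t ih =>
    have hm := key t ih.1
    constructor
    · rw [greedy_succ, greedy_succ, hm, ih.1]
    · refine key (t+1) ?_
      rw [greedy_succ, greedy_succ, hm, ih.1]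
/-- Invariant relating the run with `v` available and the run with `v` deleted. -/
def delInv (m : ℕ) {R : Type*} [Fintype R] [DecidableEq R]
    (A : Fin m → R → Prop) [∀ t v, Decidable (A t v)] (rk : R → ℕ) (v : R) (t : ℕ) : Prop :=
  (greedyMatchedUpTo m (fun s z => A s z ∧ z ≠ v) rk t = greedyMatchedUpTo m A rk t
      ∧ v ∉ greedyMatchedUpTo m A rk t) ∨
  (v ∈ greedyMatchedUpTo m A rk t ∧
      greedyMatchedUpTo m (fun s z => A s z ∧ z ≠ v) rk t = (greedyMatchedUpTo m A rk t).erase v) ∨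
  (v ∈ greedyMatchedUpTo m A rk t ∧ ∃ c, c ∉ greedyMatchedUpTo m A rk t ∧ c ≠ v ∧
      greedyMatchedUpTo m (fun s z => A s z ∧ z ≠ v) rk t
        = insert c ((greedyMatchedUpTo m A rk t).erase v))

theorem delInv_step (A : Fin m → R → Prop) [∀ t v, Decidable (A t v)] {rk : R → ℕ}
    (hrk : Function.Injective rk) (v : R) (t : ℕ) (hI : delInv m A rk v t) :
    delInv m A rk v (t+1) ∧
      ∀ z', matchAt m (fun s z => A s z ∧ z ≠ v) rk t = some z' →
        ∃ z, matchAt m A rk t = some z ∧ (z = v ∨ rk z ≤ rk z') := by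
  set M := greedyMatchedUpTo m A rk t with hM
  set M' := greedyMatchedUpTo m (fun s z => A s z ∧ z ≠ v) rk t with hM'
  rcases hmz : matchAt m A rk t with _ | z
  case none =>
    -- nothing matched in the big run; the deleted run also matches nothing
    have hm' : matchAt m (fun s z => A s z ∧ z ≠ v) rk t = none := by
      refine matchAt_eq_none ?_
      intro h w hw
      have hwM : w ∈ M := of_matchAt_none hmz h hw.1
      rcases hI with ⟨hMM, _⟩ | ⟨hvM, hMM⟩ | ⟨hvM, c, hcM, hcv, hMM⟩
      · rw [hMM]; exact hwM
      · rw [hMM]; exact Finset.mem_erase.mpr ⟨hw.2, hwM⟩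
      · rw [hMM]; exact Finset.mem_insert_of_mem (Finset.mem_erase.mpr ⟨hw.2, hwM⟩)
    refine ⟨?_, ?_⟩
    · unfold delInv
      rw [greedy_succ_none hm', greedy_succ_none hmz]
      exact hI
    · intro z' h'; rw [hm'] at h'; exact absurd h' (by simp)
  case some =>
    obtain ⟨h, hzM, hins, hAz, hmin⟩ := matchAt_some hmz
    rcases hI with ⟨hMM, hvM⟩ | ⟨hvM, hMM⟩ | ⟨hvM, c, hcM, hcv, hMM⟩
    · -- state A
      by_cases hzv : z = v
      · subst hzv
        by_cases hex : ∃ w, (A ⟨t, h⟩ w ∧ w ≠ z) ∧ w ∉ M'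
        · obtain ⟨w, hw, hwM⟩ := hex
          obtain ⟨c, hc⟩ := matchAt_isSome (A := fun s y => A s y ∧ y ≠ z) h hw hwM
          obtain ⟨_, hcM', hins', hAc, hmin'⟩ := matchAt_some hc
          refine ⟨Or.inr (Or.inr ⟨?_, c, ?_, hAc.2, ?_⟩), ?_⟩
          · rw [hins]; exact Finset.mem_insert_self _ _
          · rw [hins, Finset.mem_insert]
            push_neg
            exact ⟨hAc.2, by rw [← hMM]; exact hcM'⟩
          · rw [hins', hins, Finset.erase_insert hvM, hMM]
          · intro z' h'
            exact ⟨z, rfl, Or.inl rfl⟩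
        · have hm' : matchAt m (fun s y => A s y ∧ y ≠ z) rk t = none := by
            refine matchAt_eq_none ?_
            intro h' w hw
            push_neg at hex
            exact hex w hw
          refine ⟨Or.inr (Or.inl ⟨?_, ?_⟩), ?_⟩
          · rw [hins]; exact Finset.mem_insert_self _ _
          · rw [greedy_succ_none hm', hins, Finset.erase_insert hvM, hMM]
          · intro z' h'; rw [hm'] at h'; exact absurd h' (by simp)
      · have hm' : matchAt m (fun s y => A s y ∧ y ≠ v) rk t = some z := by
          refine matchAt_eq_some' hrk h ⟨hAz, hzv⟩ (by rw [hMM]; exact hzM) ?_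
          intro w hw hwM
          rw [hMM] at hwM
          exact hmin w hw.1 hwM
        refine ⟨Or.inl ⟨?_, ?_⟩, ?_⟩
        · rw [greedy_succ_some hm', greedy_succ_some hmz, hMM]
        · rw [hins, Finset.mem_insert]
          push_neg
          exact ⟨Ne.symm hzv, hvM⟩
        · intro z' h'
          rw [hm', Option.some_inj] at h'
          exact ⟨z, rfl, Or.inr (le_of_eq (by rw [h']))⟩
    · -- state C
      have hzv : z ≠ v := fun hc => hzM (hc ▸ hvM)
      have hm' : matchAt m (fun s y => A s y ∧ y ≠ v) rk t = some z := by
        refine matchAt_eq_some' hrk h ⟨hAz, hzv⟩ ?_ ?_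
        · rw [hMM]
          intro hc
          exact hzM (Finset.mem_of_mem_erase hc)
        · intro w hw hwM
          rw [hMM] at hwM
          refine hmin w hw.1 (fun hc => hwM (Finset.mem_erase.mpr ⟨hw.2, hc⟩))
      refine ⟨Or.inr (Or.inl ⟨?_, ?_⟩), ?_⟩
      · rw [hins]; exact Finset.mem_insert_of_mem hvM
      · rw [greedy_succ_some hm', hins, hMM, Finset.erase_insert_of_ne hzv]
      · intro z' h'
        rw [hm', Option.some_inj] at h'
        exact ⟨z, rfl, Or.inr (le_of_eq (by rw [h']))⟩
    · -- state B
      have hzv : z ≠ v := fun hc => hzM (hc ▸ hvM)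
      by_cases hzc : z = c
      · subst hzc
        by_cases hex : ∃ w, (A ⟨t, h⟩ w ∧ w ≠ v) ∧ w ∉ M'
        · obtain ⟨w, hw, hwM⟩ := hex
          obtain ⟨c', hc'⟩ := matchAt_isSome (A := fun s y => A s y ∧ y ≠ v) h hw hwM
          obtain ⟨_, hc'M', hins', hAc', hmin'⟩ := matchAt_some hc'
          have hc'M : c' ∉ M := by
            intro hmem
            refine hc'M' ?_
            rw [hMM]
            exact Finset.mem_insert_of_mem (Finset.mem_erase.mpr ⟨hAc'.2, hmem⟩)
          have hc'c : c' ≠ z := by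
            intro hcc
            refine hc'M' ?_
            rw [hMM, hcc]
            exact Finset.mem_insert_self _ _
          refine ⟨Or.inr (Or.inr ⟨?_, c', ?_, hAc'.2, ?_⟩), ?_⟩
          · rw [hins]; exact Finset.mem_insert_of_mem hvM
          · rw [hins, Finset.mem_insert]
            push_neg
            exact ⟨hc'c, hc'M⟩
          · rw [hins', hins, hMM, Finset.erase_insert_of_ne hzv]
          · intro z' h'
            rw [hc', Option.some_inj] at h'
            subst h'
            exact ⟨z, rfl, Or.inr (hmin c' hAc'.1 hc'M)⟩
        · have hm' : matchAt m (fun s y => A s y ∧ y ≠ v) rk t = none := by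
            refine matchAt_eq_none ?_
            intro h' w hw
            push_neg at hex
            exact hex w hw
          refine ⟨Or.inr (Or.inl ⟨?_, ?_⟩), ?_⟩
          · rw [hins]; exact Finset.mem_insert_of_mem hvM
          · rw [greedy_succ_none hm', hMM, hins, Finset.erase_insert_of_ne hzv]
          · intro z' h'; rw [hm'] at h'; exact absurd h' (by simp)
      · have hm' : matchAt m (fun s y => A s y ∧ y ≠ v) rk t = some z := by
          refine matchAt_eq_some' hrk h ⟨hAz, hzv⟩ ?_ ?_
          · rw [hMM, Finset.mem_insert]
            push_neg
            exact ⟨hzc, fun hc => hzM (Finset.mem_of_mem_erase hc)⟩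
          · intro w hw hwM
            rw [hMM, Finset.mem_insert] at hwM
            push_neg at hwM
            refine hmin w hw.1 (fun hc => hwM.2 (Finset.mem_erase.mpr ⟨hw.2, hc⟩))
        refine ⟨Or.inr (Or.inr ⟨?_, c, ?_, hcv, ?_⟩), ?_⟩
        · rw [hins]; exact Finset.mem_insert_of_mem hvM
        · rw [hins, Finset.mem_insert]
          push_neg
          exact ⟨fun hc => hzc hc.symm, hcM⟩
        · rw [greedy_succ_some hm', hins, hMM, Finset.erase_insert_of_ne hzv,
            Finset.insert_comm]
        · intro z' h'
          rw [hm', Option.some_inj] at h'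
          exact ⟨z, rfl, Or.inr (le_of_eq (by rw [h']))⟩

theorem delInv_all (A : Fin m → R → Prop) [∀ t v, Decidable (A t v)] {rk : R → ℕ}
    (hrk : Function.Injective rk) (v : R) : ∀ t, delInv m A rk v t := by
  intro t
  induction t with
  | zero => exact Or.inl ⟨rfl, Finset.notMem_empty v⟩
  | succ t ih => exact (delInv_step A hrk v t ih).1

/-- every keyword matched in the `v`-deleted run is matched in the full run, to a vertex
that is `v` or at least as good. -/
theorem match_mono (A : Fin m → R → Prop) [∀ t v, Decidable (A t v)] {rk : R → ℕ}
    (hrk : Function.Injective rk) (v : R) (t : ℕ) {z' : R}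
    (h : matchAt m (fun s z => A s z ∧ z ≠ v) rk t = some z') :
    ∃ z, matchAt m A rk t = some z ∧ (z = v ∨ rk z ≤ rk z') :=
  (delInv_step A hrk v t (delInv_all A hrk v t)).2 z' h
/-- Value-level function moving position `i` to position `t`, preserving relative order
of the other positions. -/
def mvVal (i t x : ℕ) : ℕ :=
  if x = i then t else if x < i ∧ t ≤ x then x + 1 else if i < x ∧ x ≤ t then x - 1 else x

theorem mvVal_lt {n i t x : ℕ} (hi : i < n) (ht : t < n) (hx : x < n) : mvVal i t x < n := by
  unfold mvVal; split_ifs <;> omega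

theorem mvVal_inj {i t x y : ℕ} (h : mvVal i t x = mvVal i t y) : x = y := by
  unfold mvVal at h; split_ifs at h <;> omega

/-- The permutation of `Fin n` moving position `i` to position `t` and preserving the
relative order of the other positions. -/
noncomputable def mvp {n : ℕ} (i t : Fin n) : Equiv.Perm (Fin n) :=
  Equiv.ofBijective (fun x => ⟨mvVal i t x, mvVal_lt i.isLt t.isLt x.isLt⟩)
    (Finite.injective_iff_bijective.mp (fun x y hxy => by
      apply Fin.ext
      exact mvVal_inj (congrArg Fin.val hxy)))

theorem mvp_val {n : ℕ} (i t x : Fin n) : (mvp i t x : ℕ) = mvVal i t x := rfl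

theorem mvp_apply_self {n : ℕ} (i t : Fin n) : mvp i t i = t := by
  apply Fin.ext
  rw [mvp_val]
  simp [mvVal]

theorem mvp_lt_iff {n : ℕ} (i t : Fin n) {x y : Fin n} (hx : (x : ℕ) ≠ i) (hy : (y : ℕ) ≠ i) :
    (mvp i t x : ℕ) < (mvp i t y : ℕ) ↔ (x : ℕ) < (y : ℕ) := by
  rw [mvp_val, mvp_val]
  unfold mvVal
  have hxn := x.isLt; have hyn := y.isLt; have hin := i.isLt; have htn := t.isLt
  split_ifs <;> omega

theorem mvp_le_t {n : ℕ} (i t : Fin n) {x : Fin n} (hx : (x : ℕ) ≠ i)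
    (h : (mvp i t x : ℕ) < t) : (x : ℕ) ≤ t := by
  rw [mvp_val] at h
  unfold mvVal at h
  split_ifs at h <;> omega
theorem key_claim {n mH : ℕ} (A : Fin mH → Fin n → Prop) [∀ t v, Decidable (A t v)]
    (σ : Equiv.Perm (Fin n)) (v : Fin n) (tF : Fin n)
    (hunm : v ∉ greedyMatchedUpTo mH A (fun z => ((mvp (σ v) tF * σ) z : ℕ)) mH)
    (s : Fin mH) (hs : A s v) :
    ∃ z, matchAt mH A (fun z => ((σ z : ℕ))) (s : ℕ) = some z ∧
      z ∈ greedyMatchedUpTo mH A (fun z => ((σ z : ℕ))) mH ∧ (σ z : ℕ) ≤ (tF : ℕ) := by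
  set i := σ v with hi
  set rkσ : Fin n → ℕ := fun z => ((σ z : ℕ)) with hrkσ
  set rkτ : Fin n → ℕ := fun z => ((mvp i tF * σ) z : ℕ) with hrkτ
  have hinjσ : Function.Injective rkσ := fun a b hab => σ.injective (Fin.ext hab)
  have hinjτ : Function.Injective rkτ :=
    fun a b hab => (mvp i tF * σ).injective (Fin.ext hab)
  have hτv : rkτ v = (tF : ℕ) := by
    rw [hrkτ]
    simp only [Equiv.Perm.mul_apply, ← hi]
    rw [mvp_apply_self]
  have hordoff : ∀ a b : Fin n, a ≠ v → b ≠ v → (rkτ a < rkτ b ↔ rkσ a < rkσ b) := by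
    intro a b ha hb
    have ha' : (σ a : ℕ) ≠ (i : ℕ) := fun hc => ha (σ.injective (Fin.ext hc))
    have hb' : (σ b : ℕ) ≠ (i : ℕ) := fun hc => hb (σ.injective (Fin.ext hc))
    exact mvp_lt_iff i tF ha' hb'
  -- in the τ-run, step s is matched to some z with rk_τ z < t and z ≠ v
  have hvMs : v ∉ greedyMatchedUpTo mH A rkτ (s : ℕ) :=
    fun hc => hunm (greedy_mono A rkτ (le_of_lt s.isLt) hc)
  obtain ⟨z0, hz0⟩ : ∃ z0, matchAt mH A rkτ (s : ℕ) = some z0 := by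
    exact matchAt_isSome (t := (s : ℕ)) s.isLt (w := v) hs hvMs
  obtain ⟨hsm, hz0M, _, hAz0, hmin0⟩ := matchAt_some hz0
  have hz0v : z0 ≠ v := fun hc => hunm (hc ▸ matchAt_mem_final hz0)
  have hz0i : (σ z0 : ℕ) ≠ (i : ℕ) := fun hc => hz0v (σ.injective (Fin.ext hc))
  have hz0lt : rkτ z0 < (tF : ℕ) := by
    have h1 : rkτ z0 ≤ rkτ v := by
      exact hmin0 v hs hvMs
    rw [hτv] at h1
    refine lt_of_le_of_ne h1 ?_
    intro hc
    exact hz0v (hinjτ (by rw [hτv]; exact hc))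
  have hz0le : (σ z0 : ℕ) ≤ (tF : ℕ) := mvp_le_t i tF hz0i hz0lt
  by_cases hcase : (tF : ℕ) ≤ (i : ℕ)
  · -- v's rank only got worse: the two runs are identical
    have heq := run_eq_of_order A hinjτ hinjσ v hunm
      (fun a b ha hb => hordoff a b ha hb)
      (fun z hz hlt => by
        have hzi : (σ z : ℕ) ≠ (i : ℕ) := fun hc => hz (σ.injective (Fin.ext hc))
        have h3 : (σ z : ℕ) ≤ (tF : ℕ) := mvp_le_t i tF hzi (by rw [hτv] at hlt; exact hlt)
        show (σ z : ℕ) < (σ v : ℕ)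
        rw [← hi]
        omega)
    refine ⟨z0, ?_, ?_, hz0le⟩
    · rw [(heq (s : ℕ)).2]; exact hz0
    · rw [(heq mH).1]; exact matchAt_mem_final hz0
  · -- v's rank improved: monotonicity
    push_neg at hcase
    have hdel := run_eq_del A hinjτ hinjσ v hunm
      (fun a b ha hb => hordoff a b ha hb)
    have hdm : matchAt mH (fun s z => A s z ∧ z ≠ v) rkσ (s : ℕ) = some z0 := by
      rw [(hdel (s : ℕ)).2]; exact hz0
    obtain ⟨z, hz, hzcomp⟩ := match_mono A hinjσ v (s : ℕ) hdm
    refine ⟨z, hz, matchAt_mem_final hz, ?_⟩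
    rcases hzcomp with hzv | hle
    · subst hzv
      show (σ z : ℕ) ≤ (tF : ℕ)
      rw [← hi]
      omega
    · exact le_trans hle hz0le
theorem mvp_inv_apply {n : ℕ} (i tF : Fin n) : (mvp i tF)⁻¹ tF = i := by
  refine (mvp i tF).injective ?_
  rw [← Equiv.Perm.mul_apply, mul_inv_cancel, Equiv.Perm.one_apply, mvp_apply_self]

theorem fiber_count {n : ℕ} (v tF : Fin n) (P : Equiv.Perm (Fin n) → Prop) [DecidablePred P] :
    (Finset.univ.filter fun σ : Equiv.Perm (Fin n) => P (mvp (σ v) tF * σ)).card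
      = n * (Finset.univ.filter fun τ : Equiv.Perm (Fin n) => τ v = tF ∧ P τ).card := by
  classical
  have hmem : ∀ σ ∈ (Finset.univ.filter fun σ : Equiv.Perm (Fin n) => P (mvp (σ v) tF * σ)),
      (mvp (σ v) tF * σ) ∈ (Finset.univ.filter fun τ : Equiv.Perm (Fin n) => τ v = tF ∧ P τ) := by
    intro σ hσ
    rw [Finset.mem_filter] at hσ ⊢
    refine ⟨Finset.mem_univ _, ?_, hσ.2⟩
    show mvp (σ v) tF (σ v) = tF
    exact mvp_apply_self _ _
  rw [Finset.card_eq_sum_card_fiberwise hmem]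
  rw [Finset.sum_congr rfl (fun τ hτ => ?_), Finset.sum_const, smul_eq_mul, mul_comm]
  · show _ = n
    have himg : ((Finset.univ.filter fun σ : Equiv.Perm (Fin n) => P (mvp (σ v) tF * σ)).filter
          fun σ => mvp (σ v) tF * σ = τ)
        = Finset.univ.image (fun i : Fin n => (mvp i tF)⁻¹ * τ) := by
      rw [Finset.mem_filter] at hτ
      obtain ⟨-, hτv, hPτ⟩ := hτ
      ext σ
      simp only [Finset.mem_filter, Finset.mem_univ, true_and, Finset.mem_image]
      constructor
      · rintro ⟨-, hΦ⟩
        exact ⟨σ v, by rw [← hΦ]; group⟩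
      · rintro ⟨i, hi⟩
        have hσv : σ v = i := by
          rw [← hi]
          show (mvp i tF)⁻¹ (τ v) = i
          rw [hτv, mvp_inv_apply]
        have hΦ : mvp (σ v) tF * σ = τ := by
          rw [hσv, ← hi]
          group
        exact ⟨by rw [hΦ]; exact hPτ, hΦ⟩
    rw [himg, Finset.card_image_of_injective _ ?inj, Finset.card_univ, Fintype.card_fin]
    case inj =>
      rw [Finset.mem_filter] at hτ
      intro i j hij
      have h0 : ((mvp i tF)⁻¹ * τ) = ((mvp j tF)⁻¹ * τ) := hij
      have h1 : ((mvp i tF)⁻¹ * τ) v = ((mvp j tF)⁻¹ * τ) v := by rw [h0]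
      have h2 : ∀ i : Fin n, ((mvp i tF)⁻¹ * τ) v = i := by
        intro i
        show (mvp i tF)⁻¹ (τ v) = i
        rw [hτ.2.1, mvp_inv_apply]
      rw [h2 i, h2 j] at h1
      exact h1

theorem card_perm_fix {n : ℕ} (v tF : Fin n) :
    (Finset.univ.filter fun τ : Equiv.Perm (Fin n) => τ v = tF).card * n = n.factorial := by
  classical
  have hmem : ∀ τ ∈ (Finset.univ : Finset (Equiv.Perm (Fin n))), τ v ∈ Finset.univ :=
    fun _ _ => Finset.mem_univ _
  have h1 : (Finset.univ : Finset (Equiv.Perm (Fin n))).card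
      = ∑ j : Fin n, ((Finset.univ : Finset (Equiv.Perm (Fin n))).filter fun τ => τ v = j).card :=
    Finset.card_eq_sum_card_fiberwise hmem
  have h2 : ∀ j : Fin n, ((Finset.univ : Finset (Equiv.Perm (Fin n))).filter fun τ => τ v = j).card
      = ((Finset.univ : Finset (Equiv.Perm (Fin n))).filter fun τ => τ v = tF).card := by
    intro j
    refine Finset.card_bij (fun τ _ => Equiv.swap j tF * τ) ?_ ?_ ?_
    · intro τ hτ
      rw [Finset.mem_filter] at hτ ⊢
      refine ⟨Finset.mem_univ _, ?_⟩
      show Equiv.swap j tF (τ v) = tF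
      rw [hτ.2, Equiv.swap_apply_left]
    · intro τ hτ τ' hτ' heq
      exact mul_left_cancel heq
    · intro τ' hτ'
      rw [Finset.mem_filter] at hτ'
      refine ⟨Equiv.swap j tF * τ', ?_, ?_⟩
      · rw [Finset.mem_filter]
        refine ⟨Finset.mem_univ _, ?_⟩
        show Equiv.swap j tF (τ' v) = j
        rw [hτ'.2, Equiv.swap_apply_right]
      · show Equiv.swap j tF * (Equiv.swap j tF * τ') = τ'
        rw [← mul_assoc, Equiv.swap_mul_self, one_mul]
  have h4 : (∑ j : Fin n, ((Finset.univ : Finset (Equiv.Perm (Fin n))).filter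
        fun τ => τ v = j).card)
      = n * ((Finset.univ : Finset (Equiv.Perm (Fin n))).filter fun τ => τ v = tF).card := by
    rw [Finset.sum_congr rfl (fun j _ => h2 j), Finset.sum_const, Finset.card_univ,
      Fintype.card_fin, smul_eq_mul]
  rw [mul_comm, ← h4, ← h1, Finset.card_univ, Fintype.card_perm, Fintype.card_fin]
theorem per_sigma {n mG mH k : ℕ} (AG : Fin mG → Fin n → Prop) [∀ u w, Decidable (AG u w)]
    (ζ : Fin mH → Fin mG)
    (hfib : ∀ uG : Fin mG, (Finset.univ.filter fun uH => ζ uH = uG).card = k)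
    (T : Finset (Fin mG)) (f : Fin mG → Fin n) (hAf : ∀ u ∈ T, AG u (f u))
    (σ : Equiv.Perm (Fin n)) (tF : Fin n) :
    k * (T.filter fun u =>
        f u ∉ greedyMatchedUpTo mH (fun s z => AG (ζ s) z)
          (fun z => ((mvp (σ (f u)) tF * σ) z : ℕ)) mH).card
      ≤ (Finset.univ.filter fun z => z ∈ greedyMatchedUpTo mH (fun s z => AG (ζ s) z)
          (fun z => ((σ z : ℕ))) mH ∧ (σ z : ℕ) ≤ (tF : ℕ)).card := by
  classical
  set T' := T.filter (fun u =>
    f u ∉ greedyMatchedUpTo mH (fun s z => AG (ζ s) z)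
      (fun z => ((mvp (σ (f u)) tF * σ) z : ℕ)) mH) with hT'
  set S' := Finset.univ.filter (fun z => z ∈ greedyMatchedUpTo mH (fun s z => AG (ζ s) z)
      (fun z => ((σ z : ℕ))) mH ∧ (σ z : ℕ) ≤ (tF : ℕ)) with hS'
  set Tok := Finset.univ.filter (fun uH : Fin mH => ζ uH ∈ T') with hTok
  have hTokcard : Tok.card = k * T'.card := by
    have hbi : Tok = T'.biUnion (fun u => Finset.univ.filter fun uH => ζ uH = u) := by
      ext uH
      simp only [hTok, Finset.mem_filter, Finset.mem_univ, true_and, Finset.mem_biUnion]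
      exact ⟨fun h => ⟨ζ uH, h, rfl⟩, fun ⟨u, hu, he⟩ => he ▸ hu⟩
    rw [hbi, Finset.card_biUnion, Finset.sum_congr rfl (fun u _ => hfib u),
      Finset.sum_const, smul_eq_mul, mul_comm]
    intro u _ u' _ huu'
    simp only [Finset.disjoint_left, Finset.mem_filter]
    rintro uH ⟨_, h1⟩ ⟨_, h2⟩
    exact huu' (h1 ▸ h2 ▸ rfl)
  have hstep : ∀ uH ∈ Tok, ∃ z, matchAt mH (fun s z => AG (ζ s) z)
      (fun z => ((σ z : ℕ))) (uH : ℕ) = some z ∧ z ∈ S' := by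
    intro uH huH
    rw [hTok, Finset.mem_filter] at huH
    have hu := huH.2
    rw [hT', Finset.mem_filter] at hu
    obtain ⟨z, hz1, hz2, hz3⟩ := key_claim (fun s z => AG (ζ s) z) σ (f (ζ uH)) tF
      hu.2 uH (hAf _ hu.1)
    exact ⟨z, hz1, by rw [hS', Finset.mem_filter]; exact ⟨Finset.mem_univ _, hz2, hz3⟩⟩
  have hle : Tok.card ≤ (S'.image some).card := by
    refine Finset.card_le_card_of_injOn
      (fun uH => matchAt mH (fun s z => AG (ζ s) z) (fun z => ((σ z : ℕ))) (uH : ℕ)) ?_ ?_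
    · intro uH huH
      obtain ⟨z, hz1, hz2⟩ := hstep uH huH
      rw [Finset.mem_coe, Finset.mem_image]
      exact ⟨z, hz2, hz1.symm⟩
    · intro uH huH uH' huH' heq
      rw [Finset.mem_coe] at huH huH'
      obtain ⟨z, hz1, _⟩ := hstep uH huH
      obtain ⟨z', hz1', _⟩ := hstep uH' huH'
      have heq2 : matchAt mH (fun s z => AG (ζ s) z) (fun z => ((σ z : ℕ))) (uH : ℕ)
          = matchAt mH (fun s z => AG (ζ s) z) (fun z => ((σ z : ℕ))) (uH' : ℕ) := heq
      rw [hz1, hz1'] at heq2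
      injection heq2 with heq3
      subst heq3
      exact Fin.ext (matchAt_inj hz1 hz1')
  rw [← hTokcard]
  calc Tok.card ≤ (S'.image some).card := hle
    _ = S'.card := Finset.card_image_of_injective _ (Option.some_injective _)

theorem master_count {n mG mH k : ℕ} (AG : Fin mG → Fin n → Prop) [∀ u w, Decidable (AG u w)]
    (ζ : Fin mH → Fin mG)
    (hfib : ∀ uG : Fin mG, (Finset.univ.filter fun uH => ζ uH = uG).card = k)
    (T : Finset (Fin mG)) (f : Fin mG → Fin n) (hAf : ∀ u ∈ T, AG u (f u))
    (hinjf : ∀ u ∈ T, ∀ u' ∈ T, u ≠ u' → f u ≠ f u') (tF : Fin n) :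
    k * T.card * n.factorial ≤
      (∑ σ : Equiv.Perm (Fin n), (Finset.univ.filter fun z =>
          z ∈ greedyMatchedUpTo mH (fun s z => AG (ζ s) z) (fun z => ((σ z : ℕ))) mH
            ∧ (σ z : ℕ) ≤ (tF : ℕ)).card)
      + k * n * (∑ τ : Equiv.Perm (Fin n), (Finset.univ.filter fun z =>
          z ∈ greedyMatchedUpTo mH (fun s z => AG (ζ s) z) (fun z => ((τ z : ℕ))) mH
            ∧ (τ z : ℕ) = (tF : ℕ)).card) := by
  classical
  set Mf : Equiv.Perm (Fin n) → Finset (Fin n) := fun τ =>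
    greedyMatchedUpTo mH (fun s z => AG (ζ s) z) (fun z => ((τ z : ℕ))) mH with hMf
  -- step 1+2: k * ∑_{u ∈ T} (#σ with u exposed) ≤ F
  have hA1 : k * (∑ u ∈ T, (Finset.univ.filter fun σ : Equiv.Perm (Fin n) =>
        f u ∉ Mf (mvp (σ (f u)) tF * σ)).card)
      ≤ ∑ σ : Equiv.Perm (Fin n), (Finset.univ.filter fun z =>
          z ∈ Mf σ ∧ (σ z : ℕ) ≤ (tF : ℕ)).card := by
    have hswap : (∑ u ∈ T, (Finset.univ.filter fun σ : Equiv.Perm (Fin n) =>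
          f u ∉ Mf (mvp (σ (f u)) tF * σ)).card)
        = ∑ σ : Equiv.Perm (Fin n), (T.filter fun u =>
            f u ∉ Mf (mvp (σ (f u)) tF * σ)).card := by
      simp only [Finset.card_filter]
      exact Finset.sum_comm
    rw [hswap, Finset.mul_sum]
    exact Finset.sum_le_sum (fun σ _ => per_sigma AG ζ hfib T f hAf σ tF)
  -- step 3: fiber count
  have hA3 : ∀ u, (Finset.univ.filter fun σ : Equiv.Perm (Fin n) =>
        f u ∉ Mf (mvp (σ (f u)) tF * σ)).card
      = n * (Finset.univ.filter fun τ : Equiv.Perm (Fin n) =>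
          τ (f u) = tF ∧ f u ∉ Mf τ).card :=
    fun u => fiber_count (f u) tF (fun τ => f u ∉ Mf τ)
  -- step 4: partition
  have hA4 : ∀ u, ((Finset.univ.filter fun τ : Equiv.Perm (Fin n) => τ (f u) = tF).card
      = (Finset.univ.filter fun τ : Equiv.Perm (Fin n) => τ (f u) = tF ∧ f u ∉ Mf τ).card
        + (Finset.univ.filter fun τ : Equiv.Perm (Fin n) =>
            τ (f u) = tF ∧ ¬ (f u ∉ Mf τ)).card) := by
    intro u
    rw [← Finset.filter_filter, ← Finset.filter_filter]
    exact (Finset.card_filter_add_card_filter_not (fun τ => f u ∉ Mf τ)).symm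
  -- step 5: bad sets inject into matched-at-t sets
  have hA5 : (∑ u ∈ T, (Finset.univ.filter fun τ : Equiv.Perm (Fin n) =>
        τ (f u) = tF ∧ ¬ (f u ∉ Mf τ)).card)
      ≤ ∑ τ : Equiv.Perm (Fin n), (Finset.univ.filter fun z =>
          z ∈ Mf τ ∧ (τ z : ℕ) = (tF : ℕ)).card := by
    have hswap : (∑ u ∈ T, (Finset.univ.filter fun τ : Equiv.Perm (Fin n) =>
          τ (f u) = tF ∧ ¬ (f u ∉ Mf τ)).card)
        = ∑ τ : Equiv.Perm (Fin n), (T.filter fun u =>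
            τ (f u) = tF ∧ ¬ (f u ∉ Mf τ)).card := by
      simp only [Finset.card_filter]
      exact Finset.sum_comm
    rw [hswap]
    refine Finset.sum_le_sum (fun τ _ => ?_)
    refine Finset.card_le_card_of_injOn f ?_ ?_
    · intro u hu
      rw [Finset.mem_coe, Finset.mem_filter] at hu
      rw [Finset.mem_coe, Finset.mem_filter]
      refine ⟨Finset.mem_univ _, not_not.mp hu.2.2, by rw [hu.2.1]⟩
    · intro u hu u' hu' heq
      by_contra hne
      exact hinjf u (Finset.mem_of_mem_filter _ hu) u' (Finset.mem_of_mem_filter _ hu') hne heq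
  -- assemble
  have hEq : T.card * n.factorial
      = n * (∑ u ∈ T, (Finset.univ.filter fun τ : Equiv.Perm (Fin n) =>
            τ (f u) = tF ∧ f u ∉ Mf τ).card)
        + n * (∑ u ∈ T, (Finset.univ.filter fun τ : Equiv.Perm (Fin n) =>
            τ (f u) = tF ∧ ¬ (f u ∉ Mf τ)).card) := by
    have h0 : ∀ u ∈ T, n.factorial
        = (Finset.univ.filter fun τ : Equiv.Perm (Fin n) =>
            τ (f u) = tF ∧ f u ∉ Mf τ).card * n
          + (Finset.univ.filter fun τ : Equiv.Perm (Fin n) =>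
            τ (f u) = tF ∧ ¬ (f u ∉ Mf τ)).card * n := by
      intro u _
      rw [← Nat.add_mul, ← hA4 u, card_perm_fix (f u) tF]
    calc T.card * n.factorial = ∑ _u ∈ T, n.factorial := by
          rw [Finset.sum_const, smul_eq_mul]
      _ = ∑ u ∈ T, ((Finset.univ.filter fun τ : Equiv.Perm (Fin n) =>
            τ (f u) = tF ∧ f u ∉ Mf τ).card * n
          + (Finset.univ.filter fun τ : Equiv.Perm (Fin n) =>
            τ (f u) = tF ∧ ¬ (f u ∉ Mf τ)).card * n) := Finset.sum_congr rfl h0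
      _ = _ := by
          rw [Finset.sum_add_distrib, ← Finset.sum_mul, ← Finset.sum_mul]
          ring
  have hS3 : (∑ u ∈ T, (Finset.univ.filter fun σ : Equiv.Perm (Fin n) =>
        f u ∉ Mf (mvp (σ (f u)) tF * σ)).card)
      = n * (∑ u ∈ T, (Finset.univ.filter fun τ : Equiv.Perm (Fin n) =>
          τ (f u) = tF ∧ f u ∉ Mf τ).card) := by
    rw [Finset.mul_sum]
    exact Finset.sum_congr rfl (fun u _ => hA3 u)
  rw [hS3] at hA1
  calc k * T.card * n.factorial
      = k * (n * (∑ u ∈ T, (Finset.univ.filter fun τ : Equiv.Perm (Fin n) =>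
            τ (f u) = tF ∧ f u ∉ Mf τ).card))
        + k * n * (∑ u ∈ T, (Finset.univ.filter fun τ : Equiv.Perm (Fin n) =>
            τ (f u) = tF ∧ ¬ (f u ∉ Mf τ)).card) := by
        rw [mul_assoc, hEq]
        ring
    _ ≤ _ := Nat.add_le_add hA1 (Nat.mul_le_mul_left _ hA5)
end Stmt9

open Stmt9 in
set_option maxHeartbeats 1000000 in
/-- for every `k ≥ 1` there is an error term `ε(OPT) → 0` (as `OPT → ∞`)
such that for every bipartite graph `G` (keywords `Fin mG`, bidders `Fin nV`) with
maximum matching size `OPT`, every left `k`-copy `H` of `G` (keywords `Fin mH` with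
`ζ : Fin mH → Fin mG` having all fibers of size `k` and inherited neighborhoods, in any
arrival order), the expected size of the matching produced by Ranking on `H` over a
uniformly random ranking `σ` of the bidders is at least `k·OPT·(1 − e^{−1/k} + ε OPT)`. -/
theorem stmt9 (k : ℕ) (hk : 1 ≤ k) :
    ∃ ε : ℕ → ℝ, Filter.Tendsto ε Filter.atTop (nhds 0) ∧
      ∀ (mG mH nV : ℕ) (AG : Fin mG → Fin nV → Prop) (_ : ∀ u v, Decidable (AG u v))
        (ζ : Fin mH → Fin mG)
        (_ : ∀ uG : Fin mG, (Finset.univ.filter fun uH => ζ uH = uG).card = k)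
        (OPT : ℕ)
        (_ : IsGreatest {val : ℕ | ∃ (T : Finset (Fin mG)) (f : Fin mG → Fin nV),
            (∀ u ∈ T, AG u (f u)) ∧
            (∀ u ∈ T, ∀ u' ∈ T, u ≠ u' → f u ≠ f u') ∧ T.card = val} OPT),
        (∑ σ : Equiv.Perm (Fin nV),
            (greedySize mH (fun t v => AG (ζ t) v) (fun v => (σ v : ℕ)) : ℝ)) /
          (Nat.factorial nV : ℝ) ≥
        (k : ℝ) * OPT * (1 - Real.exp (-(1 / (k : ℝ))) + ε OPT) := by
  have hkR : (1 : ℝ) ≤ (k : ℝ) := by exact_mod_cast hk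
  have hkpos : (0 : ℝ) < (k : ℝ) := by linarith
  refine ⟨fun N => Real.exp (-(1 / (k : ℝ)))
      - Real.exp (-(1 / (k : ℝ)) + 1 / ((k : ℝ) * ((k : ℝ) * N + 1))), ?_, ?_⟩
  · -- the error term tends to 0
    have hden : Filter.Tendsto (fun N : ℕ => (k : ℝ) * ((k : ℝ) * N + 1))
        Filter.atTop Filter.atTop := by
      refine Filter.tendsto_atTop_mono (fun N => ?_) tendsto_natCast_atTop_atTop
      have hN : (0 : ℝ) ≤ (N : ℝ) := Nat.cast_nonneg N
      have hk2 : (1 : ℝ) ≤ (k : ℝ) * (k : ℝ) := by nlinarith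
      nlinarith [mul_le_mul_of_nonneg_right hk2 hN]
    have hc : Filter.Tendsto (fun N : ℕ => 1 / ((k : ℝ) * ((k : ℝ) * N + 1)))
        Filter.atTop (nhds 0) := by
      simpa only [Pi.inv_def, one_div] using hden.inv_tendsto_atTop
    have h2 : Filter.Tendsto
        (fun N : ℕ => Real.exp (-(1 / (k : ℝ)) + 1 / ((k : ℝ) * ((k : ℝ) * N + 1))))
        Filter.atTop (nhds (Real.exp (-(1 / (k : ℝ)) + 0))) :=
      (Real.continuous_exp.tendsto _).comp (Filter.Tendsto.add tendsto_const_nhds hc)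
    have h3 := Filter.Tendsto.sub (tendsto_const_nhds
        (x := Real.exp (-(1 / (k : ℝ)))) (f := Filter.atTop (α := ℕ))) h2
    simpa using h3
  · intro mG mH nV AG hdec ζ hfib OPT hopt
    obtain ⟨⟨T, f, hAf, hinjf, hcard⟩, -⟩ := hopt
    have hLHS_nonneg : (0 : ℝ) ≤ (∑ σ : Equiv.Perm (Fin nV),
        (greedySize mH (fun t v => AG (ζ t) v) (fun v => (σ v : ℕ)) : ℝ)) /
          (Nat.factorial nV : ℝ) := by
      apply div_nonneg
      · exact Finset.sum_nonneg (fun σ _ => Nat.cast_nonneg _)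
      · exact Nat.cast_nonneg _
    rcases Nat.eq_zero_or_pos OPT with hOPT0 | hOPT1
    · rw [ge_iff_le, hOPT0]
      push_cast
      rw [mul_zero, zero_mul]
      exact hLHS_nonneg
    -- now 1 ≤ OPT, hence 1 ≤ nV and OPT ≤ nV
    have hOn : OPT ≤ nV := by
      rw [← hcard]
      have := Finset.card_le_card_of_injOn f (fun u _ => Finset.mem_univ (f u))
        (fun u hu u' hu' heq => by
          by_contra hne
          exact hinjf u (Finset.mem_coe.mp hu) u' (Finset.mem_coe.mp hu') hne heq)
      simpa using this
    have hn1 : 1 ≤ nV := le_trans hOPT1 hOn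
    -- the counting quantities
    set Mf : Equiv.Perm (Fin nV) → Finset (Fin nV) := fun σ =>
      greedyMatchedUpTo mH (fun s z => AG (ζ s) z) (fun z => ((σ z : ℕ))) mH with hMfdef
    set aF : ℕ → ℕ := fun t => ∑ σ : Equiv.Perm (Fin nV),
      (Finset.univ.filter fun z => z ∈ Mf σ ∧ (σ z : ℕ) = t).card with haF
    set FF : ℕ → ℕ := fun t => ∑ σ : Equiv.Perm (Fin nV),
      (Finset.univ.filter fun z => z ∈ Mf σ ∧ (σ z : ℕ) ≤ t).card with hFF
    have hF0 : FF 0 = aF 0 := by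
      refine Finset.sum_congr rfl (fun σ _ => ?_)
      congr 1
      ext z
      simp only [Finset.mem_filter, Finset.mem_univ, true_and, Nat.le_zero]
    have hFsucc : ∀ t : ℕ, FF (t + 1) = FF t + aF (t + 1) := by
      intro t
      rw [hFF, haF, ← Finset.sum_add_distrib]
      refine Finset.sum_congr rfl (fun σ _ => ?_)
      rw [← Finset.card_filter_add_card_filter_not
        (s := Finset.univ.filter fun z => z ∈ Mf σ ∧ (σ z : ℕ) ≤ t + 1)
        (p := fun z => (σ z : ℕ) ≤ t), Finset.filter_filter, Finset.filter_filter]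
      congr 1
      · congr 1
        ext z
        simp only [Finset.mem_filter, Finset.mem_univ, true_and]
        constructor
        · rintro ⟨⟨hm, _⟩, hle⟩; exact ⟨hm, hle⟩
        · rintro ⟨hm, hle⟩; exact ⟨⟨hm, by omega⟩, hle⟩
      · congr 1
        ext z
        simp only [Finset.mem_filter, Finset.mem_univ, true_and]
        constructor
        · rintro ⟨⟨hm, hle⟩, hgt⟩; exact ⟨hm, by omega⟩
        · rintro ⟨hm, heq⟩; exact ⟨⟨hm, by omega⟩, by omega⟩
    have hmaster : ∀ t : ℕ, t < nV → k * OPT * nV.factorial ≤ FF t + k * nV * aF t := by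
      intro t ht
      have h := master_count AG ζ hfib T f hAf hinjf ⟨t, ht⟩
      rw [hcard] at h
      exact h
    -- total size
    have hsize : (∑ σ : Equiv.Perm (Fin nV),
        greedySize mH (fun t v => AG (ζ t) v) (fun v => ((σ v : ℕ)))) = FF (nV - 1) := by
      refine Finset.sum_congr rfl (fun σ _ => ?_)
      show (greedyMatchedUpTo mH (fun s z => AG (ζ s) z) (fun z => ((σ z : ℕ))) mH).card = _
      congr 1
      ext z
      simp only [Finset.mem_filter, Finset.mem_univ, true_and]
      constructor
      · intro hm
        refine ⟨hm, ?_⟩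
        have := (σ z).isLt
        omega
      · exact fun h => h.1
    have hcast : (∑ σ : Equiv.Perm (Fin nV),
        (greedySize mH (fun t v => AG (ζ t) v) (fun v => ((σ v : ℕ))) : ℝ))
        = (FF (nV - 1) : ℝ) := by
      rw [← hsize]
      push_cast
      rfl
    clear_value Mf aF FF
    -- pass to the reals
    set c : ℝ := 1 / ((k : ℝ) * nV + 1) with hc
    have hnpos : (0 : ℝ) < (nV : ℝ) := by exact_mod_cast hn1
    have hdenpos : (0 : ℝ) < (k : ℝ) * nV + 1 := by nlinarith
    have hc0 : 0 < c := by positivity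
    have hc1 : c ≤ 1 := by
      rw [hc, div_le_one hdenpos]
      nlinarith
    set K : ℝ := (k : ℝ) * OPT * nV.factorial with hK
    have hK0 : 0 ≤ K := by positivity
    have hmasterR : ∀ t : ℕ, t < nV →
        K ≤ (FF t : ℝ) + (k : ℝ) * nV * (aF t : ℝ) := by
      intro t ht
      have h1 : ((k * OPT * nV.factorial : ℕ) : ℝ) ≤ ((FF t + k * nV * aF t : ℕ) : ℝ) :=
        Nat.cast_le.mpr (hmaster t ht)
      push_cast at h1
      rw [hK]
      linarith [h1]
    have hrec : ∀ t : ℕ, t < nV → K * (1 - (1 - c) ^ (t + 1)) ≤ (FF t : ℝ) := by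
      intro t
      induction t with
      | zero =>
        intro ht
        have h := hmasterR 0 ht
        have hF0R : (FF 0 : ℝ) = (aF 0 : ℝ) := by rw [hF0]
        rw [hF0R] at h ⊢
        have h2 : K * c ≤ (aF 0 : ℝ) := by
          rw [hc, mul_one_div, div_le_iff₀ hdenpos]
          nlinarith [h]
        calc K * (1 - (1 - c) ^ 1) = K * c := by ring
          _ ≤ _ := h2
      | succ t ih =>
        intro ht
        have iht := ih (by omega)
        have h := hmasterR (t + 1) ht
        have hFc : (FF (t + 1) : ℝ) = (FF t : ℝ) + (aF (t + 1) : ℝ) := by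
          rw [hFsucc t]; push_cast; ring
        have ha : c * (K - (FF t : ℝ)) ≤ (aF (t + 1) : ℝ) := by
          rw [hc, div_mul_eq_mul_div, div_le_iff₀ hdenpos]
          nlinarith [h, hFc]
        rw [hFc]
        calc K * (1 - (1 - c) ^ (t + 2))
            = (1 - c) * (K * (1 - (1 - c) ^ (t + 1))) + c * K := by ring
          _ ≤ (1 - c) * (FF t : ℝ) + c * K := by
              have h1c : 0 ≤ 1 - c := by linarith
              nlinarith [mul_le_mul_of_nonneg_left iht h1c]
          _ = (FF t : ℝ) + c * (K - (FF t : ℝ)) := by ring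
          _ ≤ (FF t : ℝ) + (aF (t + 1) : ℝ) := by linarith [ha]
    have hfinal : K * (1 - (1 - c) ^ nV) ≤ (FF (nV - 1) : ℝ) := by
      have h := hrec (nV - 1) (by omega)
      have hexp : nV - 1 + 1 = nV := by omega
      rwa [hexp] at h
    -- analytic estimate
    have hgepow : (1 - c) ^ nV
        ≤ Real.exp (-(1 / (k : ℝ)) + 1 / ((k : ℝ) * ((k : ℝ) * OPT + 1))) := by
      have h1 : (1 - c) ≤ Real.exp (-c) := by
        have := Real.add_one_le_exp (-c)
        linarith
      have h2 : (1 - c) ^ nV ≤ Real.exp (-c) ^ nV := by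
        apply pow_le_pow_left₀ (by linarith) h1
      have h3 : Real.exp (-c) ^ nV = Real.exp ((nV : ℝ) * (-c)) := by
        rw [← Real.exp_nat_mul]
      have h4 : (nV : ℝ) * (-c) = -(1 / (k : ℝ)) + 1 / ((k : ℝ) * ((k : ℝ) * nV + 1)) := by
        rw [hc]
        field_simp
        ring
      have h5 : Real.exp (-(1 / (k : ℝ)) + 1 / ((k : ℝ) * ((k : ℝ) * nV + 1)))
          ≤ Real.exp (-(1 / (k : ℝ)) + 1 / ((k : ℝ) * ((k : ℝ) * OPT + 1))) := by
        apply Real.exp_le_exp.mpr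
        have hOn' : (OPT : ℝ) ≤ (nV : ℝ) := by exact_mod_cast hOn
        have hd1 : (0 : ℝ) < (k : ℝ) * ((k : ℝ) * OPT + 1) := by positivity
        have hsq : (k : ℝ) * (k : ℝ) * OPT ≤ (k : ℝ) * (k : ℝ) * nV :=
          mul_le_mul_of_nonneg_left hOn' (by positivity)
        have hmono : (k : ℝ) * ((k : ℝ) * OPT + 1) ≤ (k : ℝ) * ((k : ℝ) * nV + 1) := by
          nlinarith [hsq]
        have := one_div_le_one_div_of_le hd1 hmono
        linarith
      calc (1 - c) ^ nV ≤ Real.exp (-c) ^ nV := h2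
        _ = Real.exp ((nV : ℝ) * (-c)) := h3
        _ = Real.exp (-(1 / (k : ℝ)) + 1 / ((k : ℝ) * ((k : ℝ) * nV + 1))) := by rw [h4]
        _ ≤ _ := h5
    -- put everything together
    rw [ge_iff_le]
    have hfact : (0 : ℝ) < (nV.factorial : ℝ) := by
      exact_mod_cast Nat.factorial_pos nV
    rw [le_div_iff₀ hfact]
    have hRHS : (k : ℝ) * OPT * (1 - Real.exp (-(1 / (k : ℝ)))
          + (Real.exp (-(1 / (k : ℝ)))
            - Real.exp (-(1 / (k : ℝ)) + 1 / ((k : ℝ) * ((k : ℝ) * OPT + 1)))))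
        = (k : ℝ) * OPT
            * (1 - Real.exp (-(1 / (k : ℝ)) + 1 / ((k : ℝ) * ((k : ℝ) * OPT + 1)))) := by
      ring
    rw [hRHS]
    rw [hcast]
    have hkOPT0 : (0 : ℝ) ≤ (k : ℝ) * OPT := by positivity
    calc (k : ℝ) * OPT
            * (1 - Real.exp (-(1 / (k : ℝ)) + 1 / ((k : ℝ) * ((k : ℝ) * OPT + 1))))
          * (nV.factorial : ℝ)
        ≤ (k : ℝ) * OPT * (1 - (1 - c) ^ nV) * (nV.factorial : ℝ) := by
          have h6 : 1 - Real.exp (-(1 / (k : ℝ)) + 1 / ((k : ℝ) * ((k : ℝ) * OPT + 1)))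
              ≤ 1 - (1 - c) ^ nV := by linarith [hgepow]
          have h7 := mul_le_mul_of_nonneg_left h6 hkOPT0
          exact mul_le_mul_of_nonneg_right h7 (le_of_lt hfact)
      _ = K * (1 - (1 - c) ^ nV) := by rw [hK]; ring
      _ ≤ (FF (nV - 1) : ℝ) := hfinal
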